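/- For fixed k ≥ 1, the generating function for punctual plane partitions with at most k rows (and arbitrarily many columns, no bound on entries) equals (1 + q + ⋯ + q^{k−1}) times the generating function for plane partitions with at most k rows: ∑_m p̃_{k}(m) q^m = (1 + q + ⋯ + q^{k−1}) · ∑_m p_{k}(m) q^m, as formal power series in q. -/

import Mathlib

open scoped BigOperators

namespace PP

/-- function update at two points: value `v` at `p`, `0` at `q`. -/
def wr (h : ℕ × ℕ → ℕ) (p q : ℕ × ℕ) (v : ℕ) : ℕ × ℕ → ℕ :=
  fun a => if a = p then v else if a = q then 0 else h a

lemma wr_p {h p q v} (hpq : p ≠ q) : wr h p q v p = v := by simp [wr]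
lemma wr_q {h p q v} (hpq : p ≠ q) : wr h p q v q = 0 := by simp [wr, hpq.symm]
lemma wr_other {h p q v a} (hap : a ≠ p) (haq : a ≠ q) : wr h p q v a = h a := by
  simp [wr, hap, haq]

lemma wr_support {h : ℕ × ℕ → ℕ} {p q v} (hfin : (Function.support h).Finite) :
    (Function.support (wr h p q v)).Finite := by
  apply Set.Finite.subset (hfin.union (Set.finite_singleton p))
  intro a ha
  rcases eq_or_ne a p with rfl | hap
  · exact Or.inr rfl
  rcases eq_or_ne a q with rfl | haq
  · simp [wr, hap, Function.mem_support] at ha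
  · rw [Function.mem_support, wr_other hap haq] at ha
    exact Or.inl ha

/-- sum bookkeeping for `wr`, assuming `h p = 0`. -/
lemma wr_sum {h : ℕ × ℕ → ℕ} {p q v} (hfin : (Function.support h).Finite)
    (hp : h p = 0) (hpq : p ≠ q) :
    (∑ᶠ a, wr h p q v a) + h q = (∑ᶠ a, h a) + v := by
  classical
  set T : Finset (ℕ × ℕ) := insert p (insert q hfin.toFinset) with hT
  have hsub : Function.support h ⊆ ↑T := by
    intro a ha
    simp [hT, Set.Finite.mem_toFinset, ha]
  have hsub' : Function.support (wr h p q v) ⊆ ↑T := by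
    intro a ha
    rcases eq_or_ne a p with rfl | hap
    · simp [hT]
    rcases eq_or_ne a q with rfl | haq
    · simp [hT]
    · rw [Function.mem_support, wr_other hap haq] at ha
      exact hsub ha
  rw [finsum_eq_sum_of_support_subset _ hsub, finsum_eq_sum_of_support_subset _ hsub']
  have hpT : p ∈ T := by simp [hT]
  have hqT : q ∈ T := by simp [hT]
  rw [← Finset.add_sum_erase T _ hpT, ← Finset.add_sum_erase T h hpT]
  have hq' : q ∈ T.erase p := Finset.mem_erase.2 ⟨Ne.symm hpq, hqT⟩
  rw [← Finset.add_sum_erase _ _ hq', ← Finset.add_sum_erase _ h hq']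
  have : ∀ x ∈ (T.erase p).erase q, wr h p q v x = h x := by
    intro x hx
    exact wr_other (Finset.ne_of_mem_erase (Finset.mem_of_mem_erase hx))
      (Finset.ne_of_mem_erase hx)
  rw [Finset.sum_congr rfl this, wr_p hpq, wr_q hpq, hp]
  ring

/-- monotonicity off the hole `(r,c)`, exempting pairs separated by the hole. -/
def Dec (h : ℕ × ℕ → ℕ) (r c : ℕ) : Prop :=
  ∀ a1 a2 b1 b2 : ℕ, a1 ≤ b1 → a2 ≤ b2 → ¬(a1 = r ∧ a2 = c) → ¬(b1 = r ∧ b2 = c) →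
    ¬(a1 ≤ r ∧ a2 ≤ c ∧ r ≤ b1 ∧ c ≤ b2) → h (b1, b2) ≤ h (a1, a2)

/-- full (unpunctured) plane-partition conditions with at most `k` rows. -/
def Full (k : ℕ) (h : ℕ × ℕ → ℕ) : Prop :=
  (∀ a1 a2 b1 b2 : ℕ, a1 ≤ b1 → a2 ≤ b2 → h (b1, b2) ≤ h (a1, a2)) ∧
  (∀ a : ℕ × ℕ, k ≤ a.1 → h a = 0) ∧ (Function.support h).Finite

/-- invariant of the forward slide. -/
structure Fwd (k m : ℕ) (h : ℕ × ℕ → ℕ) (r c : ℕ) : Prop where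
  dec : Dec h r c
  hp : h (r, c) = 0
  i2R : ∀ a1 a2, a1 ≤ r → a2 ≤ c → ¬(a1 = r ∧ a2 = c) → h (r, c+1) ≤ h (a1, a2)
  i2D : ∀ a1 a2, a1 ≤ r → a2 ≤ c → ¬(a1 = r ∧ a2 = c) → h (r+1, c) ≤ h (a1, a2) + 1
  i5 : ∀ j, j < c → 1 ≤ h (r, j)
  rows : ∀ a : ℕ × ℕ, k ≤ a.1 → h a = 0
  hrk : r < k
  fin : (Function.support h).Finite
  sum : (∑ᶠ a, h a) + r = m

/-- invariant of the reverse slide. -/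
structure Rev (k m : ℕ) (h : ℕ × ℕ → ℕ) (r c : ℕ) : Prop where
  dec : Dec h r c
  hp : h (r, c) = 0
  i2L : ∀ b1 b2, r ≤ b1 → c ≤ b2 → ¬(b1 = r ∧ b2 = c) → 0 < c → h (b1, b2) ≤ h (r, c-1)
  i2U : ∀ b1 b2, r ≤ b1 → c ≤ b2 → ¬(b1 = r ∧ b2 = c) → 0 < r → h (b1, b2) ≤ h (r-1, c) + 1
  i4 : 0 < c → 1 ≤ h (r, c-1)
  rows : ∀ a : ℕ × ℕ, k ≤ a.1 → h a = 0
  hrk : r < k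
  fin : (Function.support h).Finite
  sum : (∑ᶠ a, h a) + r = m

/-- state of a slide: the array together with the hole position. -/
abbrev S := (ℕ × ℕ → ℕ) × ℕ × ℕ

def term (s : S) : Prop := s.1 (s.2.1, s.2.2 + 1) = 0 ∧ s.1 (s.2.1 + 1, s.2.2) = 0

instance : DecidablePred term := fun s => by unfold term; infer_instance

/-- one forward slide step. -/
def fstep (s : S) : S :=
  let h := s.1; let r := s.2.1; let c := s.2.2
  if h (r, c+1) < h (r+1, c) then
    (wr h (r, c) (r+1, c) (h (r+1, c) - 1), (r+1, c))
  else
    (wr h (r, c) (r, c+1) (h (r, c+1)), (r, c+1))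

/-- one reverse slide step. -/
def rstep (s : S) : S :=
  let h := s.1; let r := s.2.1; let c := s.2.2
  if c = 0 ∨ (0 < r ∧ h (r-1, c) < h (r, c-1)) then
    (wr h (r, c) (r-1, c) (h (r-1, c) + 1), (r-1, c))
  else
    (wr h (r, c) (r, c-1) (h (r, c-1)), (r, c-1))

def fslide : ℕ → S → S
  | 0, s => s
  | n+1, s => if term s then s else fslide n (fstep s)

def rslide : ℕ → S → S
  | 0, s => s
  | n+1, s => if s.2 = (0, 0) then s else rslide n (rstep s)

end PP

namespace PP

lemma mkne {a1 a2 b1 b2 : ℕ} (h : ¬(a1 = b1 ∧ a2 = b2)) : ((a1, a2) : ℕ × ℕ) ≠ (b1, b2) := by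
  simp only [ne_eq, Prod.mk.injEq]; exact h

lemma mkeq {a1 a2 b1 b2 : ℕ} (h1 : a1 = b1) (h2 : a2 = b2) :
    ((a1, a2) : ℕ × ℕ) = (b1, b2) := by rw [h1, h2]

variable {k m : ℕ} {h : ℕ × ℕ → ℕ} {r c : ℕ}

lemma fwd_down (F : Fwd k m h r c) (hRD : h (r, c+1) < h (r+1, c)) :
    Fwd k m (wr h (r, c) (r+1, c) (h (r+1, c) - 1)) (r+1) c := by
  have hD1 : 1 ≤ h (r+1, c) := by omega
  have hpq : ((r, c) : ℕ × ℕ) ≠ (r+1, c) := mkne (by omega)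
  set h' := wr h (r, c) (r+1, c) (h (r+1, c) - 1) with hh'
  have eP : ∀ x1 x2, x1 = r ∧ x2 = c → h' (x1, x2) = h (r+1, c) - 1 := by
    intro x1 x2 hx; rw [mkeq hx.1 hx.2]; exact wr_p hpq
  have eQ : ∀ x1 x2, x1 = r + 1 ∧ x2 = c → h' (x1, x2) = 0 := by
    intro x1 x2 hx; rw [mkeq hx.1 hx.2]; exact wr_q hpq
  have eO : ∀ x1 x2, ¬(x1 = r ∧ x2 = c) → ¬(x1 = r+1 ∧ x2 = c) →
      h' (x1, x2) = h (x1, x2) := fun x1 x2 hx1 hx2 => wr_other (mkne hx1) (mkne hx2)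
  have hr1k : r + 1 < k := by
    by_contra hcon
    have := F.rows (r+1, c) (by simpa using Nat.le_of_not_lt (by omega))
    omega
  constructor
  case dec =>
    intro a1 a2 b1 b2 h1 h2 hna hnb hnex
    by_cases hap : a1 = r ∧ a2 = c
    · by_cases hbp : b1 = r ∧ b2 = c
      · rw [eP a1 a2 hap, eP b1 b2 hbp]
      · have hb : h (b1, b2) ≤ h (r, c+1) :=
          F.dec r (c+1) b1 b2 (by omega) (by omega) (by omega) hbp (by omega)
        rw [eP a1 a2 hap, eO b1 b2 hbp hnb]; omega
    · by_cases hbp : b1 = r ∧ b2 = c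
      · have := F.i2D a1 a2 (by omega) (by omega) hap
        rw [eP b1 b2 hbp, eO a1 a2 hap hna]; omega
      · rw [eO a1 a2 hap hna, eO b1 b2 hbp hnb]
        by_cases hex : a1 ≤ r ∧ a2 ≤ c ∧ r ≤ b1 ∧ c ≤ b2
        · have e1 : h (b1, b2) ≤ h (r, c+1) :=
            F.dec r (c+1) b1 b2 (by omega) (by omega) (by omega) hbp (by omega)
          have e2 := F.i2D a1 a2 (by omega) (by omega) hap
          omega
        · exact F.dec a1 a2 b1 b2 h1 h2 hap hbp hex
  case hp => exact eQ _ _ ⟨rfl, rfl⟩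
  case i2R =>
    intro a1 a2 ha1 ha2 hane
    have eRc : h' (r+1, c+1) = h (r+1, c+1) := eO _ _ (by omega) (by omega)
    have hRc : h (r+1, c+1) ≤ h (r, c+1) :=
      F.dec r (c+1) (r+1) (c+1) (by omega) (by omega) (by omega) (by omega) (by omega)
    rw [eRc]
    by_cases hap : a1 = r ∧ a2 = c
    · rw [eP a1 a2 hap]; omega
    · rw [eO a1 a2 hap hane]
      by_cases hup : a1 ≤ r
      · have := F.i2R a1 a2 hup (by omega) hap
        omega
      · have : h (r+1, c) ≤ h (a1, a2) :=
          F.dec a1 a2 (r+1) c (by omega) (by omega) (by omega) (by omega) (by omega)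
        omega
  case i2D =>
    intro a1 a2 ha1 ha2 hane
    have eD2 : h' (r+2, c) = h (r+2, c) := eO _ _ (by omega) (by omega)
    have hD2 : h (r+2, c) ≤ h (r+1, c) :=
      F.dec (r+1) c (r+2) c (by omega) (by omega) (by omega) (by omega) (by omega)
    rw [eD2]
    by_cases hap : a1 = r ∧ a2 = c
    · rw [eP a1 a2 hap]; omega
    · rw [eO a1 a2 hap hane]
      by_cases hup : a1 ≤ r
      · have := F.i2D a1 a2 hup (by omega) hap
        omega
      · have : h (r+1, c) ≤ h (a1, a2) :=
          F.dec a1 a2 (r+1) c (by omega) (by omega) (by omega) (by omega) (by omega)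
        omega
  case i5 =>
    intro j hj
    have e : h' (r+1, j) = h (r+1, j) := eO _ _ (by omega) (by omega)
    have : h (r+1, c) ≤ h (r+1, j) :=
      F.dec (r+1) j (r+1) c (by omega) (by omega) (by omega) (by omega) (by omega)
    rw [e]; omega
  case rows =>
    intro a hka
    obtain ⟨a1, a2⟩ := a
    simp only at hka
    have hrk := F.hrk
    rw [eO a1 a2 (by omega) (by omega)]
    exact F.rows _ hka
  case hrk => exact hr1k
  case fin => rw [hh']; exact wr_support F.fin
  case sum =>
    have hws := wr_sum (v := h (r+1, c) - 1) F.fin F.hp hpq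
    rw [← hh'] at hws
    have hs := F.sum
    omega

lemma fwd_right (F : Fwd k m h r c) (hDR : h (r+1, c) ≤ h (r, c+1)) (hR1 : 1 ≤ h (r, c+1)) :
    Fwd k m (wr h (r, c) (r, c+1) (h (r, c+1))) r (c+1) := by
  have hpq : ((r, c) : ℕ × ℕ) ≠ (r, c+1) := mkne (by omega)
  set h' := wr h (r, c) (r, c+1) (h (r, c+1)) with hh'
  have eP : ∀ x1 x2, x1 = r ∧ x2 = c → h' (x1, x2) = h (r, c+1) := by
    intro x1 x2 hx; rw [mkeq hx.1 hx.2]; exact wr_p hpq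
  have eQ : ∀ x1 x2, x1 = r ∧ x2 = c + 1 → h' (x1, x2) = 0 := by
    intro x1 x2 hx; rw [mkeq hx.1 hx.2]; exact wr_q hpq
  have eO : ∀ x1 x2, ¬(x1 = r ∧ x2 = c) → ¬(x1 = r ∧ x2 = c+1) →
      h' (x1, x2) = h (x1, x2) := fun x1 x2 hx1 hx2 => wr_other (mkne hx1) (mkne hx2)
  constructor
  case dec =>
    intro a1 a2 b1 b2 h1 h2 hna hnb hnex
    by_cases hap : a1 = r ∧ a2 = c
    · by_cases hbp : b1 = r ∧ b2 = c
      · rw [eP a1 a2 hap, eP b1 b2 hbp]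
      · -- b is strictly below p in the same column
        have hb : h (b1, b2) ≤ h (r+1, c) :=
          F.dec (r+1) c b1 b2 (by omega) (by omega) (by omega) hbp (by omega)
        rw [eP a1 a2 hap, eO b1 b2 hbp hnb]; omega
    · by_cases hbp : b1 = r ∧ b2 = c
      · have := F.i2R a1 a2 (by omega) (by omega) hap
        rw [eP b1 b2 hbp, eO a1 a2 hap hna]; omega
      · rw [eO a1 a2 hap hna, eO b1 b2 hbp hnb]
        by_cases hex : a1 ≤ r ∧ a2 ≤ c ∧ r ≤ b1 ∧ c ≤ b2
        · have e1 : h (b1, b2) ≤ h (r+1, c) :=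
            F.dec (r+1) c b1 b2 (by omega) (by omega) (by omega) hbp (by omega)
          have e2 := F.i2R a1 a2 (by omega) (by omega) hap
          omega
        · exact F.dec a1 a2 b1 b2 h1 h2 hap hbp hex
  case hp => exact eQ _ _ ⟨rfl, rfl⟩
  case i2R =>
    intro a1 a2 ha1 ha2 hane
    have eRc : h' (r, c+2) = h (r, c+2) := eO _ _ (by omega) (by omega)
    have hRc : h (r, c+2) ≤ h (r, c+1) :=
      F.dec r (c+1) r (c+2) (by omega) (by omega) (by omega) (by omega) (by omega)
    rw [eRc]
    by_cases hap : a1 = r ∧ a2 = c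
    · rw [eP a1 a2 hap]; omega
    · by_cases hup : a2 ≤ c
      · rw [eO a1 a2 hap (by omega)]
        have := F.i2R a1 a2 (by omega) hup hap
        omega
      · rw [eO a1 a2 (by omega) hane]
        have : h (r, c+1) ≤ h (a1, a2) :=
          F.dec a1 a2 r (c+1) (by omega) (by omega) (by omega) (by omega) (by omega)
        omega
  case i2D =>
    intro a1 a2 ha1 ha2 hane
    have eD2 : h' (r+1, c+1) = h (r+1, c+1) := eO _ _ (by omega) (by omega)
    have hD2 : h (r+1, c+1) ≤ h (r+1, c) :=
      F.dec (r+1) c (r+1) (c+1) (by omega) (by omega) (by omega) (by omega) (by omega)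
    rw [eD2]
    by_cases hap : a1 = r ∧ a2 = c
    · rw [eP a1 a2 hap]; omega
    · by_cases hup : a2 ≤ c
      · rw [eO a1 a2 hap (by omega)]
        have := F.i2R a1 a2 (by omega) hup hap
        omega
      · rw [eO a1 a2 (by omega) hane]
        have : h (r, c+1) ≤ h (a1, a2) :=
          F.dec a1 a2 r (c+1) (by omega) (by omega) (by omega) (by omega) (by omega)
        omega
  case i5 =>
    intro j hj
    by_cases hjc : j = c
    · rw [eP r j ⟨rfl, hjc⟩]; omega
    · have e : h' (r, j) = h (r, j) := eO _ _ (by omega) (by omega)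
      rw [e]; exact F.i5 j (by omega)
  case rows =>
    intro a hka
    obtain ⟨a1, a2⟩ := a
    simp only at hka
    have hrk := F.hrk
    rw [eO a1 a2 (by omega) (by omega)]
    exact F.rows _ hka
  case hrk => exact F.hrk
  case fin => rw [hh']; exact wr_support F.fin
  case sum =>
    have hws := wr_sum (v := h (r, c+1)) F.fin F.hp hpq
    rw [← hh'] at hws
    have hs := F.sum
    omega

lemma rev_u (Rv : Rev k m h (r+1) c) (hcond : 0 < c → h (r, c) < h (r+1, c-1)) :
    Rev k m (wr h (r+1, c) (r, c) (h (r, c) + 1)) r c := by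
  have hpq : ((r+1, c) : ℕ × ℕ) ≠ (r, c) := mkne (by omega)
  set h' := wr h (r+1, c) (r, c) (h (r, c) + 1) with hh'
  have eP : ∀ x1 x2, x1 = r + 1 ∧ x2 = c → h' (x1, x2) = h (r, c) + 1 := by
    intro x1 x2 hx; rw [mkeq hx.1 hx.2]; exact wr_p hpq
  have eQ : ∀ x1 x2, x1 = r ∧ x2 = c → h' (x1, x2) = 0 := by
    intro x1 x2 hx; rw [mkeq hx.1 hx.2]; exact wr_q hpq
  have eO : ∀ x1 x2, ¬(x1 = r + 1 ∧ x2 = c) → ¬(x1 = r ∧ x2 = c) →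
      h' (x1, x2) = h (x1, x2) := fun x1 x2 hx1 hx2 => wr_other (mkne hx1) (mkne hx2)
  have i2U' : ∀ b1 b2, r + 1 ≤ b1 → c ≤ b2 → ¬(b1 = r + 1 ∧ b2 = c) →
      h (b1, b2) ≤ h (r, c) + 1 := by
    intro b1 b2 hb1 hb2 hbp
    have := Rv.i2U b1 b2 hb1 hb2 hbp (by omega)
    simpa using this
  have i2L' : ∀ b1 b2, r + 1 ≤ b1 → c ≤ b2 → ¬(b1 = r + 1 ∧ b2 = c) → 0 < c →
      h (b1, b2) ≤ h (r+1, c-1) := fun b1 b2 hb1 hb2 hbp hc =>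
    Rv.i2L b1 b2 hb1 hb2 hbp hc
  -- cells above-left in the hole's column/row dominate
  have keyL : 0 < c → h (r, c) + 1 ≤ h (r, c-1) := by
    intro hc
    have e1 : h (r+1, c-1) ≤ h (r, c-1) :=
      Rv.dec r (c-1) (r+1) (c-1) (by omega) (by omega) (by omega) (by omega) (by omega)
    have := hcond hc
    omega
  have keyU : 0 < r → h (r, c) ≤ h (r-1, c) :=
    fun hr => Rv.dec (r-1) c r c (by omega) (by omega) (by omega) (by omega) (by omega)
  constructor
  case dec =>
    intro a1 a2 b1 b2 h1 h2 hna hnb hnex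
    by_cases hap : a1 = r + 1 ∧ a2 = c
    · by_cases hbp : b1 = r + 1 ∧ b2 = c
      · rw [eP a1 a2 hap, eP b1 b2 hbp]
      · rw [eP a1 a2 hap, eO b1 b2 hbp (by omega)]
        exact i2U' b1 b2 (by omega) (by omega) hbp
    · by_cases hbp : b1 = r + 1 ∧ b2 = c
      · -- a is left of the old hole in row r+1
        have ha1 : a1 = r + 1 := by omega
        have ha2 : a2 < c := by omega
        have hc : 0 < c := by omega
        rw [eP b1 b2 hbp, eO a1 a2 hap hna]
        have e1 : h (r+1, c-1) ≤ h (a1, a2) :=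
          Rv.dec a1 a2 (r+1) (c-1) (by omega) (by omega) (by omega) (by omega) (by omega)
        have := hcond hc
        omega
      · rw [eO a1 a2 hap hna, eO b1 b2 hbp hnb]
        by_cases hex : a1 ≤ r + 1 ∧ a2 ≤ c ∧ r + 1 ≤ b1 ∧ c ≤ b2
        · have ha1 : a1 = r + 1 := by omega
          have ha2 : a2 < c := by omega
          have hc : 0 < c := by omega
          have e1 : h (b1, b2) ≤ h (r+1, c-1) := i2L' b1 b2 (by omega) (by omega) hbp hc
          have e2 : h (r+1, c-1) ≤ h (a1, a2) :=
            Rv.dec a1 a2 (r+1) (c-1) (by omega) (by omega) (by omega) (by omega) (by omega)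
          omega
        · exact Rv.dec a1 a2 b1 b2 h1 h2 hap hbp hex
  case hp => exact eQ _ _ ⟨rfl, rfl⟩
  case i2L =>
    intro b1 b2 hb1 hb2 hbq hc
    have e : h' (r, c-1) = h (r, c-1) := eO _ _ (by omega) (by omega)
    rw [e]
    by_cases hbp : b1 = r + 1 ∧ b2 = c
    · rw [eP b1 b2 hbp]; exact keyL hc
    · rw [eO b1 b2 hbp hbq]
      by_cases hbr : r + 1 ≤ b1
      · have := i2U' b1 b2 hbr (by omega) hbp
        have := keyL hc
        omega
      · have hb1' : b1 = r := by omega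
        have hb2' : c < b2 := by omega
        exact Rv.dec r (c-1) b1 b2 (by omega) (by omega) (by omega) (by omega) (by omega)
  case i2U =>
    intro b1 b2 hb1 hb2 hbq hr
    have e : h' (r-1, c) = h (r-1, c) := eO _ _ (by omega) (by omega)
    rw [e]
    by_cases hbp : b1 = r + 1 ∧ b2 = c
    · rw [eP b1 b2 hbp]
      have := keyU hr
      omega
    · rw [eO b1 b2 hbp hbq]
      by_cases hbr : r + 1 ≤ b1
      · have := i2U' b1 b2 hbr (by omega) hbp
        have := keyU hr
        omega
      · have hb1' : b1 = r := by omega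
        have hb2' : c < b2 := by omega
        have : h (b1, b2) ≤ h (r-1, c) :=
          Rv.dec (r-1) c b1 b2 (by omega) (by omega) (by omega) (by omega) (by omega)
        omega
  case i4 =>
    intro hc
    have e : h' (r, c-1) = h (r, c-1) := eO _ _ (by omega) (by omega)
    have := keyL hc
    rw [e]; omega
  case rows =>
    intro a hka
    obtain ⟨a1, a2⟩ := a
    simp only at hka
    have hrk := Rv.hrk
    rw [eO a1 a2 (by omega) (by omega)]
    exact Rv.rows _ hka
  case hrk => have := Rv.hrk; omega
  case fin => rw [hh']; exact wr_support Rv.fin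
  case sum =>
    have hws := wr_sum (v := h (r, c) + 1) Rv.fin Rv.hp hpq
    rw [← hh'] at hws
    have hs := Rv.sum
    omega

lemma rev_l (Rv : Rev k m h r (c+1)) (hcond : 0 < r → h (r, c) ≤ h (r-1, c+1)) :
    Rev k m (wr h (r, c+1) (r, c) (h (r, c))) r c := by
  have hpq : ((r, c+1) : ℕ × ℕ) ≠ (r, c) := mkne (by omega)
  set h' := wr h (r, c+1) (r, c) (h (r, c)) with hh'
  have eP : ∀ x1 x2, x1 = r ∧ x2 = c + 1 → h' (x1, x2) = h (r, c) := by
    intro x1 x2 hx; rw [mkeq hx.1 hx.2]; exact wr_p hpq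
  have eQ : ∀ x1 x2, x1 = r ∧ x2 = c → h' (x1, x2) = 0 := by
    intro x1 x2 hx; rw [mkeq hx.1 hx.2]; exact wr_q hpq
  have eO : ∀ x1 x2, ¬(x1 = r ∧ x2 = c + 1) → ¬(x1 = r ∧ x2 = c) →
      h' (x1, x2) = h (x1, x2) := fun x1 x2 hx1 hx2 => wr_other (mkne hx1) (mkne hx2)
  have i2L' : ∀ b1 b2, r ≤ b1 → c + 1 ≤ b2 → ¬(b1 = r ∧ b2 = c + 1) →
      h (b1, b2) ≤ h (r, c) := by
    intro b1 b2 hb1 hb2 hbp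
    have := Rv.i2L b1 b2 hb1 hb2 hbp (by omega)
    simpa using this
  have keyL : 0 < c → h (r, c) ≤ h (r, c-1) :=
    fun hc => Rv.dec r (c-1) r c (by omega) (by omega) (by omega) (by omega) (by omega)
  have keyU : 0 < r → h (r, c) ≤ h (r-1, c) :=
    fun hr => Rv.dec (r-1) c r c (by omega) (by omega) (by omega) (by omega) (by omega)
  have hL1 : 1 ≤ h (r, c) := by
    have := Rv.i4 (by omega)
    simpa using this
  constructor
  case dec =>
    intro a1 a2 b1 b2 h1 h2 hna hnb hnex
    by_cases hap : a1 = r ∧ a2 = c + 1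
    · by_cases hbp : b1 = r ∧ b2 = c + 1
      · rw [eP a1 a2 hap, eP b1 b2 hbp]
      · rw [eP a1 a2 hap, eO b1 b2 hbp (by omega)]
        exact i2L' b1 b2 (by omega) (by omega) hbp
    · by_cases hbp : b1 = r ∧ b2 = c + 1
      · -- a is above the old hole in column c+1
        have ha2 : a2 = c + 1 := by omega
        have ha1 : a1 < r := by omega
        have hr : 0 < r := by omega
        rw [eP b1 b2 hbp, eO a1 a2 hap hna]
        have e1 : h (r-1, c+1) ≤ h (a1, a2) :=
          Rv.dec a1 a2 (r-1) (c+1) (by omega) (by omega) (by omega) (by omega) (by omega)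
        have := hcond hr
        omega
      · rw [eO a1 a2 hap hna, eO b1 b2 hbp hnb]
        by_cases hex : a1 ≤ r ∧ a2 ≤ c + 1 ∧ r ≤ b1 ∧ c + 1 ≤ b2
        · have ha2 : a2 = c + 1 := by omega
          have ha1 : a1 < r := by omega
          have hr : 0 < r := by omega
          have e1 : h (b1, b2) ≤ h (r, c) := i2L' b1 b2 (by omega) (by omega) hbp
          have e2 : h (r-1, c+1) ≤ h (a1, a2) :=
            Rv.dec a1 a2 (r-1) (c+1) (by omega) (by omega) (by omega) (by omega) (by omega)
          have := hcond hr
          omega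
        · exact Rv.dec a1 a2 b1 b2 h1 h2 hap hbp hex
  case hp => exact eQ _ _ ⟨rfl, rfl⟩
  case i2L =>
    intro b1 b2 hb1 hb2 hbq hc
    have e : h' (r, c-1) = h (r, c-1) := eO _ _ (by omega) (by omega)
    rw [e]
    by_cases hbp : b1 = r ∧ b2 = c + 1
    · rw [eP b1 b2 hbp]; exact keyL hc
    · rw [eO b1 b2 hbp hbq]
      by_cases hbr : c + 1 ≤ b2
      · have := i2L' b1 b2 (by omega) hbr hbp
        have := keyL hc
        omega
      · have hb2' : b2 = c := by omega
        have hb1' : r < b1 := by omega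
        exact Rv.dec r (c-1) b1 b2 (by omega) (by omega) (by omega) (by omega) (by omega)
  case i2U =>
    intro b1 b2 hb1 hb2 hbq hr
    have e : h' (r-1, c) = h (r-1, c) := eO _ _ (by omega) (by omega)
    rw [e]
    by_cases hbp : b1 = r ∧ b2 = c + 1
    · rw [eP b1 b2 hbp]
      have := keyU hr
      omega
    · rw [eO b1 b2 hbp hbq]
      by_cases hbr : c + 1 ≤ b2
      · have := i2L' b1 b2 (by omega) hbr hbp
        have := keyU hr
        omega
      · have hb2' : b2 = c := by omega
        have hb1' : r < b1 := by omega
        have : h (b1, b2) ≤ h (r-1, c) :=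
          Rv.dec (r-1) c b1 b2 (by omega) (by omega) (by omega) (by omega) (by omega)
        omega
  case i4 =>
    intro hc
    have e : h' (r, c-1) = h (r, c-1) := eO _ _ (by omega) (by omega)
    have := keyL hc
    rw [e]; omega
  case rows =>
    intro a hka
    obtain ⟨a1, a2⟩ := a
    simp only at hka
    have hrk := Rv.hrk
    rw [eO a1 a2 (by omega) (by omega)]
    exact Rv.rows _ hka
  case hrk => exact Rv.hrk
  case fin => rw [hh']; exact wr_support Rv.fin
  case sum =>
    have hws := wr_sum (v := h (r, c)) Rv.fin Rv.hp hpq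
    rw [← hh'] at hws
    have hs := Rv.sum
    omega

def FwdS (k m : ℕ) (s : S) : Prop := Fwd k m s.1 s.2.1 s.2.2
def RevS (k m : ℕ) (s : S) : Prop := Rev k m s.1 s.2.1 s.2.2

lemma fstep_eq_down {h : ℕ × ℕ → ℕ} {r c : ℕ} (hbr : h (r, c+1) < h (r+1, c)) :
    fstep (h, (r, c)) = (wr h (r, c) (r+1, c) (h (r+1, c) - 1), (r+1, c)) := by
  simp [fstep, hbr]

lemma fstep_eq_right {h : ℕ × ℕ → ℕ} {r c : ℕ} (hbr : ¬ h (r, c+1) < h (r+1, c)) :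
    fstep (h, (r, c)) = (wr h (r, c) (r, c+1) (h (r, c+1)), (r, c+1)) := by
  simp [fstep, hbr]

lemma rstep_eq_u {h : ℕ × ℕ → ℕ} {r c : ℕ}
    (hbr : c = 0 ∨ (0 < r ∧ h (r-1, c) < h (r, c-1))) :
    rstep (h, (r, c)) = (wr h (r, c) (r-1, c) (h (r-1, c) + 1), (r-1, c)) := by
  by_cases h0 : c = 0
  · simp [rstep, h0]
  · rcases hbr with h1 | h1
    · exact absurd h1 h0
    · simp [rstep, h0, h1.1, h1.2]

lemma rstep_eq_l {h : ℕ × ℕ → ℕ} {r c : ℕ}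
    (hbr : ¬(c = 0 ∨ (0 < r ∧ h (r-1, c) < h (r, c-1)))) :
    rstep (h, (r, c)) = (wr h (r, c) (r, c-1) (h (r, c-1)), (r, c-1)) := by
  simp only [rstep]
  rw [if_neg hbr]

variable {k m : ℕ}

lemma fstep_fwd {s : S} (F : FwdS k m s) (hnt : ¬term s) : FwdS k m (fstep s) := by
  obtain ⟨h, r, c⟩ := s
  replace F : Fwd k m h r c := F
  by_cases hbr : h (r, c+1) < h (r+1, c)
  · rw [fstep_eq_down hbr]
    exact fwd_down F hbr
  · rw [fstep_eq_right hbr]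
    have hR1 : 1 ≤ h (r, c+1) := by
      by_contra hcon
      have hnt' : ¬(h (r, c+1) = 0 ∧ h (r+1, c) = 0) := hnt
      omega
    exact fwd_right F (by omega) hR1

lemma rstep_rev {s : S} (Rv : RevS k m s) (hne : s.2 ≠ (0, 0)) : RevS k m (rstep s) := by
  obtain ⟨h, r, c⟩ := s
  replace Rv : Rev k m h r c := Rv
  by_cases hbr : c = 0 ∨ (0 < r ∧ h (r-1, c) < h (r, c-1))
  · have hr0 : 0 < r := by
      rcases hbr with h0 | h1
      · subst h0
        rcases Nat.eq_zero_or_pos r with h0' | h0'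
        · subst h0'; exact absurd rfl hne
        · exact h0'
      · exact h1.1
    obtain ⟨r', rfl⟩ : ∃ r', r = r' + 1 := ⟨r - 1, by omega⟩
    rw [rstep_eq_u hbr]
    simp only [Nat.add_sub_cancel]
    refine rev_u Rv ?_
    intro hc
    rcases hbr with h0 | h1
    · omega
    · simpa using h1.2
  · push_neg at hbr
    obtain ⟨c', rfl⟩ : ∃ c', c = c' + 1 := ⟨c - 1, by omega⟩
    rw [rstep_eq_l (by push_neg; exact hbr)]
    simp only [Nat.add_sub_cancel]
    refine rev_l Rv ?_
    intro hr
    have := hbr.2 hr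
    simpa using this

lemma rstep_fstep {s : S} (F : FwdS k m s) (hnt : ¬term s) : rstep (fstep s) = s := by
  obtain ⟨h, r, c⟩ := s
  replace F : Fwd k m h r c := F
  by_cases hbr : h (r, c+1) < h (r+1, c)
  · -- down move, undone by an up move
    rw [fstep_eq_down hbr]
    set h' := wr h (r, c) (r+1, c) (h (r+1, c) - 1) with hh'
    have hpq : ((r, c) : ℕ × ℕ) ≠ (r+1, c) := mkne (by omega)
    have eP : h' (r, c) = h (r+1, c) - 1 := wr_p hpq
    have eQ : h' (r+1, c) = 0 := wr_q hpq
    have hcond : c = 0 ∨ (0 < r + 1 ∧ h' (r+1-1, c) < h' (r+1, c-1)) := by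
      by_cases hc : c = 0
      · exact Or.inl hc
      · refine Or.inr ⟨by omega, ?_⟩
        have e1 : h' (r+1, c-1) = h (r+1, c-1) :=
          wr_other (mkne (by omega)) (mkne (by omega))
        have e2 : h (r+1, c) ≤ h (r+1, c-1) :=
          F.dec (r+1) (c-1) (r+1) c (by omega) (by omega) (by omega) (by omega) (by omega)
        simp only [Nat.add_sub_cancel]
        rw [eP, e1]
        omega
    rw [rstep_eq_u hcond]
    simp only [Nat.add_sub_cancel]
    have hfun : wr h' (r+1, c) (r, c) (h' (r, c) + 1) = h := by
      funext a
      obtain ⟨x1, x2⟩ := a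
      by_cases hx1 : x1 = r + 1 ∧ x2 = c
      · rw [mkeq hx1.1 hx1.2, wr_p (mkne (by omega)), eP]
        have : 1 ≤ h (r+1, c) := by omega
        omega
      · by_cases hx2 : x1 = r ∧ x2 = c
        · rw [mkeq hx2.1 hx2.2, wr_q (mkne (by omega))]
          exact F.hp.symm
        · rw [wr_other (mkne hx1) (mkne hx2), hh',
            wr_other (mkne hx2) (mkne hx1)]
    rw [hfun]
  · rw [fstep_eq_right hbr]
    set h' := wr h (r, c) (r, c+1) (h (r, c+1)) with hh'
    have hpq : ((r, c) : ℕ × ℕ) ≠ (r, c+1) := mkne (by omega)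
    have eP : h' (r, c) = h (r, c+1) := wr_p hpq
    have eQ : h' (r, c+1) = 0 := wr_q hpq
    have hcond : ¬(c + 1 = 0 ∨ (0 < r ∧ h' (r-1, c+1) < h' (r, c+1-1))) := by
      push_neg
      refine ⟨by omega, fun hr => ?_⟩
      have e1 : h' (r-1, c+1) = h (r-1, c+1) :=
        wr_other (mkne (by omega)) (mkne (by omega))
      have e2 : h (r, c+1) ≤ h (r-1, c+1) :=
        F.dec (r-1) (c+1) r (c+1) (by omega) (by omega) (by omega) (by omega) (by omega)
      simp only [Nat.add_sub_cancel]
      rw [eP, e1]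
      omega
    rw [rstep_eq_l hcond]
    simp only [Nat.add_sub_cancel]
    have hfun : wr h' (r, c+1) (r, c) (h' (r, c)) = h := by
      funext a
      obtain ⟨x1, x2⟩ := a
      by_cases hx1 : x1 = r ∧ x2 = c + 1
      · rw [mkeq hx1.1 hx1.2, wr_p (mkne (by omega)), eP]
      · by_cases hx2 : x1 = r ∧ x2 = c
        · rw [mkeq hx2.1 hx2.2, wr_q (mkne (by omega))]
          exact F.hp.symm
        · rw [wr_other (mkne hx1) (mkne hx2), hh',
            wr_other (mkne hx2) (mkne hx1)]
    rw [hfun]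

lemma fstep_rstep {s : S} (Rv : RevS k m s) (hne : s.2 ≠ (0, 0)) :
    fstep (rstep s) = s ∧ ¬term (rstep s) := by
  obtain ⟨h, r, c⟩ := s
  replace Rv : Rev k m h r c := Rv
  by_cases hbr : c = 0 ∨ (0 < r ∧ h (r-1, c) < h (r, c-1))
  · have hr0 : 0 < r := by
      rcases hbr with h0 | h1
      · subst h0
        rcases Nat.eq_zero_or_pos r with h0' | h0'
        · subst h0'; exact absurd rfl hne
        · exact h0'
      · exact h1.1
    obtain ⟨r', rfl⟩ : ∃ r', r = r' + 1 := ⟨r - 1, by omega⟩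
    rw [rstep_eq_u hbr]
    simp only [Nat.add_sub_cancel]
    set h' := wr h (r'+1, c) (r', c) (h (r', c) + 1) with hh'
    have hpq : ((r'+1, c) : ℕ × ℕ) ≠ (r', c) := mkne (by omega)
    have eP : h' (r'+1, c) = h (r', c) + 1 := wr_p hpq
    have eQ : h' (r', c) = 0 := wr_q hpq
    have eR : h' (r', c+1) = h (r', c+1) := wr_other (mkne (by omega)) (mkne (by omega))
    have hRD : h (r', c+1) ≤ h (r', c) :=
      Rv.dec r' c r' (c+1) (by omega) (by omega) (by omega) (by omega) (by omega)
    have hb : h' (r', c+1) < h' (r'+1, c) := by rw [eP, eR]; omega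
    constructor
    · rw [fstep_eq_down hb]
      rw [eP]
      simp only [Nat.add_sub_cancel]
      have hfun : wr h' (r', c) (r'+1, c) (h (r', c)) = h := by
        funext a
        obtain ⟨x1, x2⟩ := a
        by_cases hx1 : x1 = r' ∧ x2 = c
        · rw [mkeq hx1.1 hx1.2, wr_p (mkne (by omega))]
        · by_cases hx2 : x1 = r' + 1 ∧ x2 = c
          · rw [mkeq hx2.1 hx2.2, wr_q (mkne (by omega))]
            exact Rv.hp.symm
          · rw [wr_other (mkne hx1) (mkne hx2), hh',
              wr_other (mkne hx2) (mkne hx1)]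
      rw [hfun]
    · intro ht
      have := ht.2
      simp only at this
      rw [eP] at this
      omega
  · push_neg at hbr
    obtain ⟨c', rfl⟩ : ∃ c', c = c' + 1 := ⟨c - 1, by omega⟩
    rw [rstep_eq_l (by push_neg; exact hbr)]
    simp only [Nat.add_sub_cancel]
    set h' := wr h (r, c'+1) (r, c') (h (r, c')) with hh'
    have hpq : ((r, c'+1) : ℕ × ℕ) ≠ (r, c') := mkne (by omega)
    have eP : h' (r, c'+1) = h (r, c') := wr_p hpq
    have eQ : h' (r, c') = 0 := wr_q hpq
    have eD : h' (r+1, c') = h (r+1, c') := wr_other (mkne (by omega)) (mkne (by omega))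
    have hDL : h (r+1, c') ≤ h (r, c') :=
      Rv.dec r c' (r+1) c' (by omega) (by omega) (by omega) (by omega) (by omega)
    have hL1 : 1 ≤ h (r, c') := by
      have := Rv.i4 (by omega : 0 < c' + 1)
      simpa using this
    have hb : ¬ h' (r, c'+1) < h' (r+1, c') := by rw [eP, eD]; omega
    constructor
    · rw [fstep_eq_right hb]
      rw [eP]
      have hfun : wr h' (r, c') (r, c'+1) (h (r, c')) = h := by
        funext a
        obtain ⟨x1, x2⟩ := a
        by_cases hx1 : x1 = r ∧ x2 = c'
        · rw [mkeq hx1.1 hx1.2, wr_p (mkne (by omega))]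
        · by_cases hx2 : x1 = r ∧ x2 = c' + 1
          · rw [mkeq hx2.1 hx2.2, wr_q (mkne (by omega))]
            exact Rv.hp.symm
          · rw [wr_other (mkne hx1) (mkne hx2), hh',
              wr_other (mkne hx2) (mkne hx1)]
      rw [hfun]
    · intro ht
      have := ht.1
      simp only at this
      rw [eP] at this
      omega

lemma fslide_term_fix {s : S} (ht : term s) : ∀ n, fslide n s = s := by
  intro n
  induction n with
  | zero => rfl
  | succ n _ => simp [fslide, ht]

lemma fslide_add (a b : ℕ) (s : S) : fslide (a + b) s = fslide b (fslide a s) := by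
  induction a generalizing s with
  | zero => rw [Nat.zero_add]; rfl
  | succ a ih =>
    by_cases ht : term s
    · rw [fslide_term_fix ht, fslide_term_fix ht, fslide_term_fix ht]
    · have e1 : a + 1 + b = (a + b) + 1 := by omega
      rw [e1]
      show (if term s then s else fslide (a+b) (fstep s)) = fslide b (fslide (a+1) s)
      rw [if_neg ht]
      show fslide (a + b) (fstep s) = fslide b (if term s then s else fslide a (fstep s))
      rw [if_neg ht, ih]

lemma rslide_zero_fix {s : S} (h0 : s.2 = (0, 0)) : ∀ n, rslide n s = s := by
  intro n
  induction n with
  | zero => rfl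
  | succ n _ => simp [rslide, h0]

lemma rslide_add (a b : ℕ) (s : S) : rslide (a + b) s = rslide b (rslide a s) := by
  induction a generalizing s with
  | zero => rw [Nat.zero_add]; rfl
  | succ a ih =>
    by_cases h0 : s.2 = (0, 0)
    · rw [rslide_zero_fix h0, rslide_zero_fix h0, rslide_zero_fix h0]
    · have e1 : a + 1 + b = (a + b) + 1 := by omega
      rw [e1]
      show (if s.2 = (0,0) then s else rslide (a+b) (rstep s)) = rslide b (rslide (a+1) s)
      rw [if_neg h0]
      show rslide (a + b) (rstep s) = rslide b (if s.2 = (0,0) then s else rslide a (rstep s))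
      rw [if_neg h0, ih]

/-- termination measure for the forward slide. -/
noncomputable def meas (s : S) : ℕ :=
  (Function.support s.1 ∩ {a : ℕ × ℕ | s.2.1 ≤ a.1 ∧ s.2.2 ≤ a.2}).ncard

lemma meas_fin (s : S) (hfin : (Function.support s.1).Finite) :
    (Function.support s.1 ∩ {a : ℕ × ℕ | s.2.1 ≤ a.1 ∧ s.2.2 ≤ a.2}).Finite :=
  hfin.subset Set.inter_subset_left

lemma fstep_coord (s : S) : (fstep s).2.1 + (fstep s).2.2 = s.2.1 + s.2.2 + 1 := by
  obtain ⟨h, r, c⟩ := s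
  by_cases hbr : h (r, c+1) < h (r+1, c)
  · rw [fstep_eq_down hbr]; show r + 1 + c = r + c + 1; omega
  · rw [fstep_eq_right hbr]; show r + (c + 1) = r + c + 1; omega

lemma fstep_ne0 (s : S) : (fstep s).2 ≠ (0, 0) := by
  obtain ⟨h, r, c⟩ := s
  by_cases hbr : h (r, c+1) < h (r+1, c)
  · rw [fstep_eq_down hbr]; exact mkne (by omega)
  · rw [fstep_eq_right hbr]; exact mkne (by omega)

lemma rstep_coord {s : S} (hne : s.2 ≠ (0, 0)) :
    (rstep s).2.1 + (rstep s).2.2 + 1 = s.2.1 + s.2.2 := by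
  obtain ⟨h, r, c⟩ := s
  have hne' : ¬(r = 0 ∧ c = 0) := by
    intro he; exact hne (mkeq he.1 he.2)
  by_cases hbr : c = 0 ∨ (0 < r ∧ h (r-1, c) < h (r, c-1))
  · have hr0 : 0 < r := by
      rcases hbr with h0 | h1
      · omega
      · exact h1.1
    rw [rstep_eq_u hbr]; show r - 1 + c + 1 = r + c; omega
  · have hc0 : 0 < c := by
      rcases Nat.eq_zero_or_pos c with h0 | h1
      · exact absurd (Or.inl h0) hbr
      · exact h1
    rw [rstep_eq_l hbr]; show r + (c - 1) + 1 = r + c; omega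

lemma ssub_ncard_lt {A B : Set (ℕ × ℕ)} (hsub : A ⊆ B) (x : ℕ × ℕ) (hxB : x ∈ B)
    (hxA : x ∉ A) (hfin : B.Finite) : A.ncard < B.ncard :=
  Set.ncard_lt_ncard ⟨hsub, fun hc => hxA (hc hxB)⟩ hfin

lemma meas_lt {s : S} (F : FwdS k m s) (hnt : ¬term s) : meas (fstep s) < meas s := by
  obtain ⟨h, r, c⟩ := s
  replace F : Fwd k m h r c := F
  have hnt' : ¬(h (r, c+1) = 0 ∧ h (r+1, c) = 0) := hnt
  have hfin : (Function.support h ∩ {a : ℕ × ℕ | r ≤ a.1 ∧ c ≤ a.2}).Finite :=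
    F.fin.subset Set.inter_subset_left
  by_cases hbr : h (r, c+1) < h (r+1, c)
  · rw [fstep_eq_down hbr]
    refine ssub_ncard_lt ?_ (r+1, c) ?_ ?_ hfin
    · rintro ⟨x1, x2⟩ ⟨hx1, hx2⟩
      simp only [Function.mem_support] at hx1
      simp only [Set.mem_setOf_eq] at hx2
      have hq : ¬(x1 = r + 1 ∧ x2 = c) := by
        intro he
        rw [mkeq he.1 he.2, wr_q (mkne (by omega))] at hx1
        exact hx1 rfl
      have hp : ¬(x1 = r ∧ x2 = c) := by omega
      rw [wr_other (mkne hp) (mkne hq)] at hx1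
      exact ⟨hx1, by simp only [Set.mem_setOf_eq]; omega⟩
    · exact ⟨by simp only [Function.mem_support]; omega, by simp only [Set.mem_setOf_eq]; omega⟩
    · rintro ⟨hx1, -⟩
      simp only [Function.mem_support] at hx1
      rw [wr_q (mkne (by omega))] at hx1
      exact hx1 rfl
  · rw [fstep_eq_right hbr]
    refine ssub_ncard_lt ?_ (r, c+1) ?_ ?_ hfin
    · rintro ⟨x1, x2⟩ ⟨hx1, hx2⟩
      simp only [Function.mem_support] at hx1
      simp only [Set.mem_setOf_eq] at hx2
      have hq : ¬(x1 = r ∧ x2 = c + 1) := by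
        intro he
        rw [mkeq he.1 he.2, wr_q (mkne (by omega))] at hx1
        exact hx1 rfl
      have hp : ¬(x1 = r ∧ x2 = c) := by omega
      rw [wr_other (mkne hp) (mkne hq)] at hx1
      exact ⟨hx1, by simp only [Set.mem_setOf_eq]; omega⟩
    · exact ⟨by simp only [Function.mem_support]; omega, by simp only [Set.mem_setOf_eq]; omega⟩
    · rintro ⟨hx1, -⟩
      simp only [Function.mem_support] at hx1
      rw [wr_q (mkne (by omega))] at hx1
      exact hx1 rfl

lemma fslide_reach : ∀ n {s : S}, FwdS k m s → meas s ≤ n →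
    term (fslide n s) ∧ FwdS k m (fslide n s) := by
  intro n
  induction n with
  | zero =>
    intro s F hm
    by_cases ht : term s
    · exact ⟨ht, F⟩
    · exfalso
      obtain ⟨h, r, c⟩ := s
      replace F : Fwd k m h r c := F
      have hnt' : ¬(h (r, c+1) = 0 ∧ h (r+1, c) = 0) := ht
      have hfin : (Function.support h ∩ {a : ℕ × ℕ | r ≤ a.1 ∧ c ≤ a.2}).Finite :=
        F.fin.subset Set.inter_subset_left
      have hpos : 0 < meas (h, (r, c)) := by
        rcases Nat.eq_zero_or_pos (h (r, c+1)) with h0 | h1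
        · refine (Set.ncard_pos hfin).2 ⟨(r+1, c), ?_, ?_⟩
          · simp only [Function.mem_support]; omega
          · simp only [Set.mem_setOf_eq]; omega
        · refine (Set.ncard_pos hfin).2 ⟨(r, c+1), ?_, ?_⟩
          · simp only [Function.mem_support]; omega
          · simp only [Set.mem_setOf_eq]; omega
      omega
  | succ n ih =>
    intro s F hm
    by_cases ht : term s
    · rw [fslide_term_fix ht]; exact ⟨ht, F⟩
    · show term (if term s then s else fslide n (fstep s)) ∧
        FwdS k m (if term s then s else fslide n (fstep s))
      rw [if_neg ht]
      have := meas_lt F ht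
      exact ih (fstep_fwd F ht) (by omega)

lemma fslide_uniq {s : S} {n n' : ℕ} (h1 : term (fslide n s)) (h2 : term (fslide n' s)) :
    fslide n s = fslide n' s := by
  rcases Nat.le_total n n' with hle | hle
  · obtain ⟨d, rfl⟩ : ∃ d, n' = n + d := ⟨n' - n, by omega⟩
    rw [fslide_add, fslide_term_fix h1]
  · obtain ⟨d, rfl⟩ : ∃ d, n = n' + d := ⟨n - n', by omega⟩
    rw [fslide_add, fslide_term_fix h2]

lemma rt1 : ∀ n (s : S), FwdS k m s → term (fslide n s) →
    ∃ j, (fslide n s).2.1 + (fslide n s).2.2 = s.2.1 + s.2.2 + j ∧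
      rslide j (fslide n s) = s := by
  intro n
  induction n with
  | zero =>
    exact fun s _ _ => ⟨0, by rw [show fslide 0 s = s from rfl]; omega, rfl⟩
  | succ n ih =>
    intro s F ht
    by_cases hts : term s
    · rw [fslide_term_fix hts] at ht ⊢
      exact ⟨0, by omega, rfl⟩
    · have hstep : fslide (n+1) s = fslide n (fstep s) := by
        show (if term s then s else fslide n (fstep s)) = _
        rw [if_neg hts]
      rw [hstep] at ht ⊢
      obtain ⟨j, hj1, hj2⟩ := ih (fstep s) (fstep_fwd F hts) ht
      refine ⟨j + 1, ?_, ?_⟩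
      · have := fstep_coord s
        omega
      · rw [rslide_add j 1, hj2]
        show (if (fstep s).2 = (0,0) then fstep s else rstep (fstep s)) = s
        rw [if_neg (fstep_ne0 s)]
        exact rstep_fstep F hts

lemma rt2 : ∀ n (s : S), RevS k m s → s.2.1 + s.2.2 = n →
    fslide n (rslide n s) = s ∧ (rslide n s).2 = (0, 0) ∧ RevS k m (rslide n s) := by
  intro n
  induction n with
  | zero =>
    intro s Rv hc
    have h0 : s.2 = (0, 0) := by
      obtain ⟨h, r, c⟩ := s
      simp only at hc
      exact mkeq (by omega) (by omega)
    exact ⟨rfl, h0, Rv⟩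
  | succ n ih =>
    intro s Rv hc
    have hne : s.2 ≠ (0, 0) := by
      intro he
      rw [he] at hc
      simp at hc
    have hstep : rslide (n+1) s = rslide n (rstep s) := by
      show (if s.2 = (0,0) then s else rslide n (rstep s)) = _
      rw [if_neg hne]
    rw [hstep]
    have hrc := rstep_coord hne
    obtain ⟨ih1, ih2, ih3⟩ := ih (rstep s) (rstep_rev Rv hne) (by omega)
    refine ⟨?_, ih2, ih3⟩
    rw [fslide_add n 1, ih1]
    obtain ⟨hfr, hnt⟩ := fstep_rstep Rv hne
    show (if term (rstep s) then rstep s else fstep (rstep s)) = s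
    rw [if_neg hnt]
    exact hfr

/-- punctual plane-partition conditions (hole at the corner). -/
def PuncCond (k : ℕ) (h : ℕ × ℕ → ℕ) : Prop :=
  Dec h 0 0 ∧ h (0, 0) = 0 ∧ (∀ a : ℕ × ℕ, k ≤ a.1 → h a = 0) ∧
    (Function.support h).Finite

lemma punc_fwd {k m : ℕ} {h : ℕ × ℕ → ℕ} (hk : 0 < k) (P : PuncCond k h)
    (hs : (∑ᶠ a, h a) = m) : Fwd k m h 0 0 := by
  obtain ⟨P1, P2, P3, P4⟩ := P
  exact ⟨P1, P2, fun a1 a2 h1 h2 hne => by omega, fun a1 a2 h1 h2 hne => by omega,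
    fun j hj => by omega, P3, hk, P4, by omega⟩

lemma rev_punc {k m : ℕ} {h : ℕ × ℕ → ℕ} (Rv : Rev k m h 0 0) :
    PuncCond k h ∧ (∑ᶠ a, h a) = m := by
  refine ⟨⟨Rv.dec, Rv.hp, Rv.rows, Rv.fin⟩, ?_⟩
  have := Rv.sum
  omega

lemma term_full {k m : ℕ} {h : ℕ × ℕ → ℕ} {r c : ℕ} (F : Fwd k m h r c)
    (ht : term (h, (r, c))) : Full k h ∧ (∀ j, h (r, j) = 0 ↔ c ≤ j) := by
  obtain ⟨htR, htD⟩ : h (r, c+1) = 0 ∧ h (r+1, c) = 0 := ht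
  -- any cell ≥ the hole (other than the hole) vanishes
  have hz : ∀ b1 b2, r ≤ b1 → c ≤ b2 → ¬(b1 = r ∧ b2 = c) → h (b1, b2) = 0 := by
    intro b1 b2 h1 h2 hne
    by_cases hrow : b1 = r
    · have : h (b1, b2) ≤ h (r, c+1) :=
        F.dec r (c+1) b1 b2 (by omega) (by omega) (by omega) (by omega) (by omega)
      omega
    · have : h (b1, b2) ≤ h (r+1, c) :=
        F.dec (r+1) c b1 b2 (by omega) (by omega) (by omega) (by omega) (by omega)
      omega
  constructor
  · refine ⟨?_, F.rows, F.fin⟩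
    intro a1 a2 b1 b2 h1 h2
    by_cases hbp : b1 = r ∧ b2 = c
    · rw [mkeq hbp.1 hbp.2, F.hp]; omega
    · by_cases hap : a1 = r ∧ a2 = c
      · rw [hz b1 b2 (by omega) (by omega) hbp]; omega
      · by_cases hex : a1 ≤ r ∧ a2 ≤ c ∧ r ≤ b1 ∧ c ≤ b2
        · rw [hz b1 b2 (by omega) (by omega) hbp]; omega
        · exact F.dec a1 a2 b1 b2 h1 h2 hap hbp hex
  · intro j
    constructor
    · intro h0
      by_contra hlt
      have := F.i5 j (by omega)
      omega
    · intro hcj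
      by_cases hjc : j = c
      · rw [hjc]; exact F.hp
      · exact hz r j (by omega) (by omega) (by omega)

lemma full_rev {k m : ℕ} {g : ℕ × ℕ → ℕ} {i J : ℕ} (Fu : Full k g) (hik : i < k)
    (hJ : g (i, J) = 0) (hJ' : ∀ j, j < J → g (i, j) ≠ 0)
    (hs : (∑ᶠ a, g a) + i = m) : Rev k m g i J ∧ term (g, (i, J)) := by
  obtain ⟨Fu1, Fu2, Fu3⟩ := Fu
  have hz : ∀ b1 b2, i ≤ b1 → J ≤ b2 → g (b1, b2) = 0 := by
    intro b1 b2 h1 h2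
    have := Fu1 i J b1 b2 h1 h2
    omega
  refine ⟨⟨fun a1 a2 b1 b2 h1 h2 _ _ _ => Fu1 a1 a2 b1 b2 h1 h2, hJ, ?_, ?_, ?_,
    Fu2, hik, Fu3, hs⟩, ?_, ?_⟩
  · intro b1 b2 h1 h2 hne hc
    rw [hz b1 b2 h1 h2]; omega
  · intro b1 b2 h1 h2 hne hr
    rw [hz b1 b2 h1 h2]; omega
  · intro hc
    have := hJ' (J - 1) (by omega)
    omega
  · exact hz i (J+1) (by omega) (by omega)
  · exact hz (i+1) J (by omega) (by omega)

noncomputable def rowJ (g : ℕ × ℕ → ℕ) (i : ℕ) : ℕ := sInf {j | g (i, j) = 0}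

lemma rowJ_spec {g : ℕ × ℕ → ℕ} (i : ℕ) (hfin : (Function.support g).Finite) :
    g (i, rowJ g i) = 0 ∧ ∀ j, j < rowJ g i → g (i, j) ≠ 0 := by
  have hne : {j | g (i, j) = 0}.Nonempty := by
    by_contra hcon
    rw [Set.not_nonempty_iff_eq_empty] at hcon
    have hsub : Set.range (fun j : ℕ => ((i, j) : ℕ × ℕ)) ⊆ Function.support g := by
      rintro a ⟨j, rfl⟩
      intro h0
      have : j ∈ {j | g (i, j) = 0} := h0
      rw [hcon] at this
      exact this
    have hinj : Function.Injective (fun j : ℕ => ((i, j) : ℕ × ℕ)) := by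
      intro a b hab
      simpa using congrArg Prod.snd hab
    exact ((Set.infinite_range_of_injective hinj).mono hsub) hfin
  unfold rowJ
  exact ⟨Nat.sInf_mem hne, fun j hj =>
    @Nat.notMem_of_lt_sInf {j | g (i, j) = 0} j hj⟩

lemma rowJ_eq {g : ℕ × ℕ → ℕ} {i J : ℕ} (hJ : g (i, J) = 0)
    (hmin : ∀ j, j < J → g (i, j) ≠ 0) : rowJ g i = J := by
  unfold rowJ
  refine le_antisymm (Nat.sInf_le (show J ∈ {j | g (i, j) = 0} from hJ)) ?_
  by_contra hcon
  exact hmin _ (by omega) (Nat.sInf_mem (⟨J, hJ⟩ : Set.Nonempty {j | g (i, j) = 0}))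

noncomputable def fmapS (s : S) : S := fslide (meas s) s

noncomputable def gmapS (x : ℕ × (ℕ × ℕ → ℕ)) : S :=
  rslide (x.1 + rowJ x.2 x.1) (x.2, (x.1, rowJ x.2 x.1))

variable {k m : ℕ}

lemma toFun_ok {h : ℕ × ℕ → ℕ} (hk : 0 < k) (P : PuncCond k h) (hs : ∑ᶠ a, h a = m) :
    (fmapS (h, (0, 0))).2.1 < k ∧ Full k (fmapS (h, (0, 0))).1 ∧
    (∑ᶠ a, (fmapS (h, (0, 0))).1 a) + (fmapS (h, (0, 0))).2.1 = m := by
  have F0 : FwdS k m (h, ((0:ℕ), (0:ℕ))) := punc_fwd hk P hs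
  obtain ⟨ht, hF⟩ := fslide_reach (meas (h, ((0:ℕ),(0:ℕ)))) F0 le_rfl
  have hF' : Fwd k m (fmapS (h, (0,0))).1 (fmapS (h, (0,0))).2.1 (fmapS (h, (0,0))).2.2 := hF
  have ht' : term ((fmapS (h, (0,0))).1, ((fmapS (h, (0,0))).2.1, (fmapS (h, (0,0))).2.2)) := ht
  obtain ⟨hFull, _⟩ := term_full hF' ht'
  exact ⟨hF'.hrk, hFull, hF'.sum⟩

lemma invFun_ok {x : ℕ × (ℕ × ℕ → ℕ)} (hik : x.1 < k) (Fu : Full k x.2)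
    (hs : (∑ᶠ a, x.2 a) + x.1 = m) :
    PuncCond k (gmapS x).1 ∧ (∑ᶠ a, (gmapS x).1 a) = m ∧ (gmapS x).2 = (0, 0) ∧
    fslide (x.1 + rowJ x.2 x.1) (gmapS x) = (x.2, (x.1, rowJ x.2 x.1)) ∧
    term ((x.2, (x.1, rowJ x.2 x.1)) : S) := by
  obtain ⟨hJ0, hJmin⟩ := rowJ_spec (g := x.2) x.1 Fu.2.2
  obtain ⟨Rv, htm⟩ := full_rev Fu hik hJ0 hJmin hs
  obtain ⟨h1, h2, h3⟩ := rt2 (x.1 + rowJ x.2 x.1) (x.2, (x.1, rowJ x.2 x.1)) Rv rfl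
  have hRv0 : Rev k m (gmapS x).1 (gmapS x).2.1 (gmapS x).2.2 := h3
  have h2' : (gmapS x).2 = ((0:ℕ), (0:ℕ)) := h2
  rw [show (gmapS x).2.1 = 0 from by rw [h2'], show (gmapS x).2.2 = 0 from by rw [h2']] at hRv0
  obtain ⟨P, hsum⟩ := rev_punc hRv0
  exact ⟨P, hsum, h2', h1, htm⟩

noncomputable def mainEquiv (k m : ℕ) (hk : 0 < k) :
    {h : ℕ × ℕ → ℕ // PuncCond k h ∧ ∑ᶠ a, h a = m} ≃
    {x : ℕ × (ℕ × ℕ → ℕ) // x.1 < k ∧ Full k x.2 ∧ (∑ᶠ a, x.2 a) + x.1 = m} where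
  toFun := fun p =>
    ⟨((fmapS (p.1, (0, 0))).2.1, (fmapS (p.1, (0, 0))).1),
      toFun_ok hk p.2.1 p.2.2⟩
  invFun := fun q =>
    ⟨(gmapS q.1).1, (invFun_ok q.2.1 q.2.2.1 q.2.2.2).1,
      (invFun_ok q.2.1 q.2.2.1 q.2.2.2).2.1⟩
  left_inv := by
    rintro ⟨h, P, hs⟩
    apply Subtype.ext
    show (gmapS ((fmapS (h, (0, 0))).2.1, (fmapS (h, (0, 0))).1)).1 = h
    have F0 : FwdS k m (h, ((0:ℕ), (0:ℕ))) := punc_fwd hk P hs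
    obtain ⟨ht, hF⟩ := fslide_reach (meas (h, ((0:ℕ),(0:ℕ)))) F0 le_rfl
    have hF' : Fwd k m (fmapS (h, (0,0))).1 (fmapS (h, (0,0))).2.1 (fmapS (h, (0,0))).2.2 := hF
    have ht' : term ((fmapS (h, (0,0))).1, ((fmapS (h, (0,0))).2.1, (fmapS (h, (0,0))).2.2)) := ht
    obtain ⟨hFull, hchar⟩ := term_full hF' ht'
    obtain ⟨j, hj1, hj2⟩ := rt1 (meas (h, ((0:ℕ),(0:ℕ)))) (h, (0, 0)) F0 ht
    have hJeq : rowJ (fmapS (h, (0,0))).1 (fmapS (h, (0,0))).2.1 = (fmapS (h, (0,0))).2.2 :=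
      rowJ_eq ((hchar (fmapS (h, (0,0))).2.2).2 le_rfl) (fun j hjlt h0 => by
        have := (hchar j).1 h0
        omega)
    have hgm : gmapS ((fmapS (h, (0, 0))).2.1, (fmapS (h, (0, 0))).1) =
        rslide ((fmapS (h, (0,0))).2.1 + (fmapS (h, (0,0))).2.2)
          ((fmapS (h, (0,0))).1, ((fmapS (h, (0,0))).2.1, (fmapS (h, (0,0))).2.2)) := by
      unfold gmapS
      simp only [hJeq]
    rw [hgm]
    have heta : ((fmapS (h, (0,0))).1, ((fmapS (h, (0,0))).2.1, (fmapS (h, (0,0))).2.2))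
        = fmapS (h, (0,0)) := rfl
    rw [heta]
    have hfm : fmapS (h, ((0:ℕ),(0:ℕ))) = fslide (meas (h, ((0:ℕ),(0:ℕ)))) (h, ((0:ℕ),(0:ℕ))) := rfl
    have hj' : (fmapS (h, (0,0))).2.1 + (fmapS (h, (0,0))).2.2 = j := by
      rw [hfm]
      simp only at hj1
      omega
    rw [hj', hfm, hj2]
  right_inv := by
    rintro ⟨x, hik, Fu, hs⟩
    apply Subtype.ext
    obtain ⟨P, hsum, h2', h1, htm⟩ := invFun_ok hik Fu hs
    show ((fmapS ((gmapS x).1, (0, 0))).2.1, (fmapS ((gmapS x).1, (0, 0))).1) = x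
    have hseq : (((gmapS x).1, ((0:ℕ), (0:ℕ))) : S) = gmapS x := by
      conv_rhs => rw [show gmapS x = ((gmapS x).1, (gmapS x).2) from rfl, h2']
    have F0 : FwdS k m ((gmapS x).1, ((0:ℕ), (0:ℕ))) := punc_fwd hk P hsum
    obtain ⟨ht, hF⟩ := fslide_reach (meas ((gmapS x).1, ((0:ℕ),(0:ℕ)))) F0 le_rfl
    have htt : term (fslide (x.1 + rowJ x.2 x.1) ((gmapS x).1, ((0:ℕ), (0:ℕ)))) := by
      rw [hseq, h1]
      exact htm
    have huniq := fslide_uniq ht htt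
    have hfin : fmapS ((gmapS x).1, ((0:ℕ), (0:ℕ))) = (x.2, (x.1, rowJ x.2 x.1)) := by
      have : fmapS ((gmapS x).1, ((0:ℕ),(0:ℕ)))
          = fslide (meas ((gmapS x).1, ((0:ℕ),(0:ℕ)))) ((gmapS x).1, ((0:ℕ),(0:ℕ))) := rfl
      rw [this, huniq, hseq, h1]
    rw [hfin]

section Glue

variable {k : ℕ}

def embF (k : ℕ) : Fin k × ℕ → ℕ × ℕ := fun p => (p.1.1, p.2)

lemma embF_inj : Function.Injective (embF k) := by
  intro p q he
  obtain ⟨⟨a, ha⟩, x⟩ := p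
  obtain ⟨⟨b, hb⟩, y⟩ := q
  simp only [embF, Prod.mk.injEq] at he
  simp only [Prod.mk.injEq, Fin.mk.injEq]
  exact he

def extF (k : ℕ) (f : Fin k × ℕ → ℕ) : ℕ × ℕ → ℕ :=
  fun a => if ha : a.1 < k then f (⟨a.1, ha⟩, a.2) else 0

def resF (k : ℕ) (h : ℕ × ℕ → ℕ) : Fin k × ℕ → ℕ := fun p => h (p.1.1, p.2)

lemma extF_emb (f : Fin k × ℕ → ℕ) (p : Fin k × ℕ) : extF k f (embF k p) = f p := by
  obtain ⟨⟨a, ha⟩, x⟩ := p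
  simp [extF, embF, ha]

lemma extF_support (f : Fin k × ℕ → ℕ) :
    Function.support (extF k f) ⊆ embF k '' Function.support f := by
  intro a ha
  rw [Function.mem_support] at ha
  by_cases hak : a.1 < k
  · refine ⟨(⟨a.1, hak⟩, a.2), ?_, rfl⟩
    rw [Function.mem_support]
    intro h0
    apply ha
    rw [show a = embF k (⟨a.1, hak⟩, a.2) from rfl, extF_emb, h0]
  · exact absurd (by simp [extF, hak]) ha

lemma sum_extF (f : Fin k × ℕ → ℕ) (hf : (Function.support f).Finite) :
    ∑ᶠ a, extF k f a = ∑ᶠ p, f p := by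
  classical
  have hsub : Function.support (extF k f) ⊆ ↑(hf.toFinset.image (embF k)) := by
    intro a ha
    obtain ⟨p, hp, rfl⟩ := extF_support f ha
    simp only [Finset.coe_image, Set.mem_image, Finset.mem_coe, Set.Finite.mem_toFinset]
    exact ⟨p, hp, rfl⟩
  rw [finsum_eq_sum_of_support_subset _ hsub,
    Finset.sum_image (fun p _ q _ he => embF_inj he),
    finsum_eq_sum_of_support_subset f (s := hf.toFinset) (by intro x hx; simpa using hx)]
  exact Finset.sum_congr rfl fun p _ => extF_emb f p

lemma extF_res (h : ℕ × ℕ → ℕ) (hrows : ∀ a : ℕ × ℕ, k ≤ a.1 → h a = 0) :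
    extF k (resF k h) = h := by
  funext a
  by_cases hak : a.1 < k
  · simp [extF, resF, hak]
  · simp [extF, hak, (hrows a (by omega)).symm]

lemma res_extF (f : Fin k × ℕ → ℕ) : resF k (extF k f) = f := by
  funext p
  exact extF_emb f p

/-- transfer of the full plane-partition sets. -/
noncomputable def fullEquiv (k n : ℕ) :
    {f : Fin k × ℕ → ℕ //
      (∀ p q : Fin k × ℕ, p.1 ≤ q.1 → p.2 ≤ q.2 → f q ≤ f p) ∧
      (Function.support f).Finite ∧ ∑ᶠ p, f p = n} ≃
    {h : ℕ × ℕ → ℕ // Full k h ∧ ∑ᶠ a, h a = n} where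
  toFun := fun f =>
    ⟨extF k f.1, by
      obtain ⟨hmono, hfin, hsum⟩ := f.2
      refine ⟨⟨?_, ?_, ?_⟩, ?_⟩
      · intro a1 a2 b1 b2 h1 h2
        by_cases hbk : b1 < k
        · have hak : a1 < k := by omega
          have : extF k f.1 (a1, a2) = f.1 (⟨a1, hak⟩, a2) := by simp [extF, hak]
          rw [this]
          have : extF k f.1 (b1, b2) = f.1 (⟨b1, hbk⟩, b2) := by simp [extF, hbk]
          rw [this]
          exact hmono _ _ h1 h2
        · have : extF k f.1 (b1, b2) = 0 := by simp [extF, hbk]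
          rw [this]; omega
      · intro a hka
        simp [extF, show ¬ a.1 < k by omega]
      · exact (hfin.image (embF k)).subset (extF_support f.1)
      · rw [sum_extF f.1 hfin]; exact hsum⟩
  invFun := fun h =>
    ⟨resF k h.1, by
      obtain ⟨⟨hmono, hrows, hfin⟩, hsum⟩ := h.2
      refine ⟨?_, ?_, ?_⟩
      · intro p q h1 h2
        exact hmono p.1.1 p.2 q.1.1 q.2 h1 h2
      · have : Function.support (resF k h.1) ⊆ embF k ⁻¹' Function.support h.1 := by
          intro p hp
          exact hp
        exact (hfin.preimage (embF_inj.injOn)).subset this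
      · have he : extF k (resF k h.1) = h.1 := extF_res h.1 hrows
        have hfin' : (Function.support (resF k h.1)).Finite := by
          have : Function.support (resF k h.1) ⊆ embF k ⁻¹' Function.support h.1 :=
            fun p hp => hp
          exact (hfin.preimage (embF_inj.injOn)).subset this
        rw [← sum_extF (resF k h.1) hfin', he]
        exact hsum⟩
  left_inv := fun f => Subtype.ext (res_extF f.1)
  right_inv := fun h => Subtype.ext (extF_res h.1 h.2.1.2.1)

end Glue

section GlueP

variable {k : ℕ}

abbrev PDom (k : ℕ) := {p : Fin k × ℕ // ¬((p.1 : ℕ) = 0 ∧ p.2 = 0)}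

def embP (k : ℕ) : PDom k → ℕ × ℕ := fun p => (p.1.1.1, p.1.2)

lemma embP_inj : Function.Injective (embP k) := by
  intro p q he
  obtain ⟨⟨⟨a, ha⟩, x⟩, hp⟩ := p
  obtain ⟨⟨⟨b, hb⟩, y⟩, hq⟩ := q
  simp only [embP, Prod.mk.injEq] at he
  apply Subtype.ext
  simp only [Prod.mk.injEq, Fin.mk.injEq]
  exact he

def extP (k : ℕ) (f : PDom k → ℕ) : ℕ × ℕ → ℕ :=
  fun a => if ha : a.1 < k ∧ ¬(a.1 = 0 ∧ a.2 = 0) then f ⟨(⟨a.1, ha.1⟩, a.2), ha.2⟩ else 0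

def resP (k : ℕ) (h : ℕ × ℕ → ℕ) : PDom k → ℕ := fun p => h (p.1.1.1, p.1.2)

lemma extP_emb (f : PDom k → ℕ) (p : PDom k) : extP k f (embP k p) = f p := by
  obtain ⟨⟨⟨a, ha⟩, x⟩, hp⟩ := p
  have hc : ((⟨a, ha⟩ : Fin k), x).1.1 = a := rfl
  rw [hc] at hp
  simp [extP, embP, ha, hp]

lemma extP_support (f : PDom k → ℕ) :
    Function.support (extP k f) ⊆ embP k '' Function.support f := by
  intro a ha
  rw [Function.mem_support] at ha
  by_cases hak : a.1 < k ∧ ¬(a.1 = 0 ∧ a.2 = 0)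
  · refine ⟨⟨(⟨a.1, hak.1⟩, a.2), hak.2⟩, ?_, rfl⟩
    rw [Function.mem_support]
    intro h0
    apply ha
    rw [show a = embP k ⟨(⟨a.1, hak.1⟩, a.2), hak.2⟩ from rfl, extP_emb, h0]
  · exact absurd (by simp only [extP]; rw [dif_neg hak]) ha

lemma sum_extP (f : PDom k → ℕ) (hf : (Function.support f).Finite) :
    ∑ᶠ a, extP k f a = ∑ᶠ p, f p := by
  classical
  have hsub : Function.support (extP k f) ⊆ ↑(hf.toFinset.image (embP k)) := by
    intro a ha
    obtain ⟨p, hp, rfl⟩ := extP_support f ha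
    simp only [Finset.coe_image, Set.mem_image, Finset.mem_coe, Set.Finite.mem_toFinset]
    exact ⟨p, hp, rfl⟩
  rw [finsum_eq_sum_of_support_subset _ hsub,
    Finset.sum_image (fun p _ q _ he => embP_inj he),
    finsum_eq_sum_of_support_subset f (s := hf.toFinset) (by intro x hx; simpa using hx)]
  exact Finset.sum_congr rfl fun p _ => extP_emb f p

lemma extP_res (h : ℕ × ℕ → ℕ) (hrows : ∀ a : ℕ × ℕ, k ≤ a.1 → h a = 0)
    (hcorner : h (0, 0) = 0) : extP k (resP k h) = h := by
  funext a
  by_cases hak : a.1 < k ∧ ¬(a.1 = 0 ∧ a.2 = 0)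
  · simp [extP, resP, hak]
  · push_neg at hak
    by_cases h1 : a.1 < k
    · have h2 : a.1 = 0 ∧ a.2 = 0 := hak h1
      have : a = ((0 : ℕ), (0 : ℕ)) := mkeq h2.1 h2.2 ▸ (by
        rw [show a = (a.1, a.2) from rfl, h2.1, h2.2])
      rw [this, hcorner, extP]
      simp
    · simp [extP, h1, (hrows a (by omega)).symm]

lemma res_extP (f : PDom k → ℕ) : resP k (extP k f) = f := by
  funext p
  exact extP_emb f p

/-- transfer of the punctual plane-partition sets. -/
noncomputable def puncEquiv (k m : ℕ) :
    {f : PDom k → ℕ //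
      (∀ p q : PDom k, p.1.1 ≤ q.1.1 → p.1.2 ≤ q.1.2 → f q ≤ f p) ∧
      (Function.support f).Finite ∧ ∑ᶠ p, f p = m} ≃
    {h : ℕ × ℕ → ℕ // PuncCond k h ∧ ∑ᶠ a, h a = m} where
  toFun := fun f =>
    ⟨extP k f.1, by
      obtain ⟨hmono, hfin, hsum⟩ := f.2
      refine ⟨⟨?_, ?_, ?_, ?_⟩, ?_⟩
      · intro a1 a2 b1 b2 h1 h2 hna hnb _
        by_cases hbk : b1 < k
        · have hak : a1 < k := by omega
          have ea : extP k f.1 (a1, a2) = f.1 ⟨(⟨a1, hak⟩, a2), hna⟩ := by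
            simp [extP, hak, hna]
          have eb : extP k f.1 (b1, b2) = f.1 ⟨(⟨b1, hbk⟩, b2), hnb⟩ := by
            simp [extP, hbk, hnb]
          rw [ea, eb]
          exact hmono _ _ h1 h2
        · have : extP k f.1 (b1, b2) = 0 := by
            simp only [extP]
            rw [dif_neg (by omega)]
          rw [this]; omega
      · simp [extP]
      · intro a hka
        simp only [extP]
        rw [dif_neg (by omega)]
      · exact (hfin.image (embP k)).subset (extP_support f.1)
      · rw [sum_extP f.1 hfin]; exact hsum⟩
  invFun := fun h =>
    ⟨resP k h.1, by
      obtain ⟨⟨hdec, hcorner, hrows, hfin⟩, hsum⟩ := h.2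
      refine ⟨?_, ?_, ?_⟩
      · intro p q h1 h2
        have hp := p.2
        have hq := q.2
        exact hdec p.1.1.1 p.1.2 q.1.1.1 q.1.2 h1 h2 hp hq (by
          intro hcon
          exact hp ⟨by omega, by omega⟩)
      · have : Function.support (resP k h.1) ⊆ embP k ⁻¹' Function.support h.1 :=
          fun p hp => hp
        exact (hfin.preimage (embP_inj.injOn)).subset this
      · have he : extP k (resP k h.1) = h.1 := extP_res h.1 hrows hcorner
        have hfin' : (Function.support (resP k h.1)).Finite := by
          have : Function.support (resP k h.1) ⊆ embP k ⁻¹' Function.support h.1 :=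
            fun p hp => hp
          exact (hfin.preimage (embP_inj.injOn)).subset this
        rw [← sum_extP (resP k h.1) hfin', he]
        exact hsum⟩
  left_inv := fun f => Subtype.ext (res_extP f.1)
  right_inv := fun h => Subtype.ext (extP_res h.1 h.2.1.2.2.1 h.2.1.2.1)

end GlueP

section Count

variable {k m : ℕ}

lemma full_col_zero {h : ℕ × ℕ → ℕ} {n : ℕ} (Fu : Full k h) (hs : ∑ᶠ a, h a = n)
    {a1 a2 : ℕ} (ha : n < a2) : h (a1, a2) = 0 := by
  classical
  by_contra h0
  have hmono := Fu.1
  have hfin := Fu.2.2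
  set T : Finset (ℕ × ℕ) := (Finset.range (a2+1)).image (fun j => (a1, j)) with hT
  have hTsub : T ⊆ hfin.toFinset := by
    intro x hx
    rw [hT, Finset.mem_image] at hx
    obtain ⟨j, hj, rfl⟩ := hx
    rw [Set.Finite.mem_toFinset, Function.mem_support]
    intro hzero
    have : h (a1, a2) ≤ h (a1, j) := hmono a1 j a1 a2 le_rfl (by
      rw [Finset.mem_range] at hj; omega)
    omega
  have hsum1 : ∑ x ∈ T, h x ≤ ∑ x ∈ hfin.toFinset, h x :=
    Finset.sum_le_sum_of_subset hTsub
  have hsum2 : ∑ x ∈ hfin.toFinset, h x = n := by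
    rw [← hs, finsum_eq_sum_of_support_subset h (s := hfin.toFinset)
      (by intro x hx; simpa using hx)]
  have hsum3 : ∑ x ∈ T, h x = ∑ j ∈ Finset.range (a2+1), h (a1, j) := by
    rw [hT, Finset.sum_image (by intro x _ y _ he; simpa using congrArg Prod.snd he)]
  have hsum4 : a2 + 1 ≤ ∑ j ∈ Finset.range (a2+1), h (a1, j) := by
    calc a2 + 1 = ∑ _j ∈ Finset.range (a2+1), 1 := by simp
    _ ≤ ∑ j ∈ Finset.range (a2+1), h (a1, j) := by
        apply Finset.sum_le_sum
        intro j hj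
        have : h (a1, a2) ≤ h (a1, j) := hmono a1 j a1 a2 le_rfl (by
          rw [Finset.mem_range] at hj; omega)
        omega
  omega

lemma full_finite (k n : ℕ) : Finite {h : ℕ × ℕ → ℕ // Full k h ∧ ∑ᶠ a, h a = n} := by
  classical
  have hbound : ∀ (h : {h : ℕ × ℕ → ℕ // Full k h ∧ ∑ᶠ a, h a = n}) (a : ℕ × ℕ),
      h.1 a ≤ n := by
    intro h a
    have := single_le_finsum a h.2.1.2.2 (fun j => Nat.zero_le _)
    omega
  apply Finite.of_injective (f := fun h : {h : ℕ × ℕ → ℕ // Full k h ∧ ∑ᶠ a, h a = n} =>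
    (fun a : Fin k × Fin (n+1) => (⟨h.1 (a.1.1, a.2.1), by
      have := hbound h (a.1.1, a.2.1); omega⟩ : Fin (n+1))))
  intro h1 h2 he
  apply Subtype.ext
  funext a
  obtain ⟨a1, a2⟩ := a
  by_cases hak : a1 < k
  · by_cases han : a2 ≤ n
    · have := congrFun he (⟨a1, hak⟩, ⟨a2, by omega⟩)
      simpa using congrArg Fin.val this
    · rw [full_col_zero h1.2.1 h1.2.2 (by omega),
        full_col_zero h2.2.1 h2.2.2 (by omega)]
  · rw [h1.2.1.2.1 (a1, a2) (by simpa using by omega),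
      h2.2.1.2.1 (a1, a2) (by simpa using by omega)]

def sigEquiv (k m : ℕ) :
    {x : ℕ × (ℕ × ℕ → ℕ) // x.1 < k ∧ Full k x.2 ∧ (∑ᶠ a, x.2 a) + x.1 = m} ≃
    Σ i : Fin k, {g : ℕ × ℕ → ℕ // Full k g ∧ (∑ᶠ a, g a) + i.1 = m} where
  toFun := fun x => ⟨⟨x.1.1, x.2.1⟩, ⟨x.1.2, x.2.2.1, x.2.2.2⟩⟩
  invFun := fun y => ⟨(y.1.1, y.2.1), y.1.2, y.2.2.1, y.2.2.2⟩
  left_inv := fun x => rfl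
  right_inv := fun y => rfl

end Count

end PP

/-- `p_k(m)`: the number of plane partitions of `m` with at most `k` rows (arbitrarily
many columns, no bound on entries): weakly decreasing arrays on `Fin k × ℕ` with
finite support and sum `m`. -/
noncomputable def rowPP (k m : ℕ) : ℕ :=
  Nat.card {f : Fin k × ℕ → ℕ //
    (∀ p q : Fin k × ℕ, p.1 ≤ q.1 → p.2 ≤ q.2 → f q ≤ f p) ∧
    (Function.support f).Finite ∧ ∑ᶠ p, f p = m}

/-- `p̃_k(m)`: the number of punctual plane partitions of `m` with at most `k` rows:
the same, but indexed by positions other than the corner `(1,1)`. -/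
noncomputable def rowPPpunc (k m : ℕ) : ℕ :=
  Nat.card {f : {p : Fin k × ℕ // ¬((p.1 : ℕ) = 0 ∧ p.2 = 0)} → ℕ //
    (∀ p q : {p : Fin k × ℕ // ¬((p.1 : ℕ) = 0 ∧ p.2 = 0)},
      p.1.1 ≤ q.1.1 → p.1.2 ≤ q.1.2 → f q ≤ f p) ∧
    (Function.support f).Finite ∧ ∑ᶠ p, f p = m}


namespace PP

theorem count_eq (k m : ℕ) (hk : 1 ≤ k) :
    rowPPpunc k m = ∑ i ∈ Finset.range k, if i ≤ m then rowPP k (m - i) else 0 := by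
  classical
  rw [rowPPpunc, Nat.card_congr (puncEquiv k m), Nat.card_congr (mainEquiv k m hk),
    Nat.card_congr (sigEquiv k m)]
  haveI hfinfib : ∀ i : Fin k,
      Finite {g : ℕ × ℕ → ℕ // Full k g ∧ (∑ᶠ a, g a) + i.1 = m} := by
    intro i
    by_cases him : i.1 ≤ m
    · haveI := full_finite k (m - i.1)
      exact Finite.of_equiv _
        ((Equiv.subtypeEquivRight (fun g => and_congr_right fun _ => by omega)) :
          {g : ℕ × ℕ → ℕ // Full k g ∧ ∑ᶠ a, g a = m - i.1} ≃
          {g : ℕ × ℕ → ℕ // Full k g ∧ (∑ᶠ a, g a) + i.1 = m})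
    · haveI : IsEmpty {g : ℕ × ℕ → ℕ // Full k g ∧ (∑ᶠ a, g a) + i.1 = m} :=
        ⟨fun g => by have := g.2.2; omega⟩
      infer_instance
  letI : ∀ i : Fin k, Fintype {g : ℕ × ℕ → ℕ // Full k g ∧ (∑ᶠ a, g a) + i.1 = m} :=
    fun i => Fintype.ofFinite _
  rw [Nat.card_eq_fintype_card, Fintype.card_sigma]
  have hterm : ∀ i : Fin k,
      Fintype.card {g : ℕ × ℕ → ℕ // Full k g ∧ (∑ᶠ a, g a) + i.1 = m}
        = if i.1 ≤ m then rowPP k (m - i.1) else 0 := by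
    intro i
    by_cases him : i.1 ≤ m
    · rw [if_pos him, ← Nat.card_eq_fintype_card,
        Nat.card_congr
          ((Equiv.subtypeEquivRight (fun g => and_congr_right fun _ => by omega)) :
            {g : ℕ × ℕ → ℕ // Full k g ∧ (∑ᶠ a, g a) + i.1 = m} ≃
            {g : ℕ × ℕ → ℕ // Full k g ∧ ∑ᶠ a, g a = m - i.1}),
        rowPP, Nat.card_congr (fullEquiv k (m - i.1))]
    · rw [if_neg him, Fintype.card_eq_zero_iff.2 ⟨fun g => by have := g.2.2; omega⟩]
  rw [Finset.sum_congr rfl (fun i _ => hterm i)]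
  exact Fin.sum_univ_eq_sum_range (fun i => if i ≤ m then rowPP k (m - i) else 0) k

end PP

/-- For fixed `k ≥ 1`,
`∑_m p̃_k(m) q^m = (1 + q + ⋯ + q^{k-1}) · ∑_m p_k(m) q^m` as formal power series. -/
theorem stmt9 (k : ℕ) (hk : 1 ≤ k) :
    PowerSeries.mk (fun m => (rowPPpunc k m : ℚ)) =
      (∑ i ∈ Finset.range k, PowerSeries.X ^ i) *
        PowerSeries.mk (fun m => (rowPP k m : ℚ)) := by
  apply PowerSeries.ext
  intro m
  rw [PowerSeries.coeff_mk, Finset.sum_mul, map_sum]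
  have hco : ∀ i ∈ Finset.range k,
      (PowerSeries.coeff (R := ℚ) m) (PowerSeries.X ^ i * PowerSeries.mk (fun m => (rowPP k m : ℚ)))
        = if i ≤ m then (rowPP k (m - i) : ℚ) else 0 := by
    intro i _
    rw [mul_comm, PowerSeries.coeff_mul_X_pow']
    split_ifs with h
    · rw [PowerSeries.coeff_mk]
    · rfl
  rw [Finset.sum_congr rfl hco, PP.count_eq k m hk, Nat.cast_sum]
  exact Finset.sum_congr rfl fun i _ => by split_ifs <;> simp
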